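/- For p ≥ 1, the map g_ε from [0,T] × L^p(ℝ) to L^p(ℝ) defined by g_ε(τ,U)(x) = ε^{-1} e^{x⁻}(w(τ,x) − U(x))⁺ is Hölder continuous in τ with exponent (p+1)/(2p): there is C₀ > 0 such that ‖g_ε(τ₁,U) − g_ε(τ₂,U)‖_{L^p} ≤ ε^{-1} C₀ |τ₁ − τ₂|^{(p+1)/(2p)} for all U ∈ L^p(ℝ) and τ₁, τ₂ ∈ (0,T]. -/

import Mathlib

open MeasureTheory Real

/-- Standard normal cumulative distribution function. -/
noncomputable def stdNormalCDF (d : ℝ) : ℝ :=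
  ∫ ξ in Set.Iio d, Real.exp (-ξ ^ 2 / 2) / Real.sqrt (2 * Real.pi)

noncomputable def gauss (ξ : ℝ) : ℝ := Real.exp (-ξ ^ 2 / 2) / Real.sqrt (2 * Real.pi)

lemma gauss_nonneg (ξ : ℝ) : 0 ≤ gauss ξ :=
  div_nonneg (Real.exp_nonneg _) (Real.sqrt_nonneg _)

lemma gauss_even (ξ : ℝ) : gauss (-ξ) = gauss ξ := by simp [gauss]

lemma sqrt_two_pi_pos : 0 < Real.sqrt (2 * Real.pi) :=
  Real.sqrt_pos.2 (by positivity)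

lemma gauss_le (ξ : ℝ) : gauss ξ ≤ (Real.sqrt (2 * Real.pi))⁻¹ := by
  rw [gauss, div_eq_mul_inv]
  have h1 : Real.exp (-ξ ^ 2 / 2) ≤ 1 := by
    rw [show (1:ℝ) = Real.exp 0 by simp]
    exact Real.exp_le_exp.2 (by nlinarith [sq_nonneg ξ])
  nlinarith [inv_pos.2 sqrt_two_pi_pos, Real.exp_pos (-ξ ^ 2 / 2)]

lemma continuous_gauss : Continuous gauss := by
  unfold gauss; fun_prop

lemma integrable_gauss : Integrable gauss := by
  have : Integrable (fun ξ : ℝ => Real.exp (-(1/2) * ξ ^ 2)) :=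
    integrable_exp_neg_mul_sq (by norm_num)
  have h := this.div_const (Real.sqrt (2 * Real.pi))
  refine h.congr (Filter.Eventually.of_forall fun ξ => ?_)
  simp [gauss]; ring_nf

lemma integral_gauss : ∫ ξ, gauss ξ = 1 := by
  have h : ∫ ξ : ℝ, Real.exp (-(1/2) * ξ ^ 2) = Real.sqrt (Real.pi / (1/2)) :=
    integral_gaussian (1/2)
  have h2 : ∫ ξ : ℝ, gauss ξ = (∫ ξ : ℝ, Real.exp (-(1/2) * ξ ^ 2)) / Real.sqrt (2 * Real.pi) := by
    rw [← integral_div]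
    exact integral_congr_ae (Filter.Eventually.of_forall fun ξ => by simp [gauss]; ring_nf)
  rw [h2, h]
  rw [show Real.pi / (1/2) = 2 * Real.pi by ring]
  exact div_self sqrt_two_pi_pos.ne'

lemma stdNormalCDF_eq_gauss (d : ℝ) : stdNormalCDF d = ∫ ξ in Set.Iio d, gauss ξ := rfl

lemma stdNormalCDF_nonneg (d : ℝ) : 0 ≤ stdNormalCDF d := by
  rw [stdNormalCDF_eq_gauss]
  exact setIntegral_nonneg measurableSet_Iio fun ξ _ => gauss_nonneg ξ

lemma stdNormalCDF_le_one (d : ℝ) : stdNormalCDF d ≤ 1 := by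
  rw [stdNormalCDF_eq_gauss, ← integral_gauss]
  exact setIntegral_le_integral integrable_gauss
    (Filter.Eventually.of_forall fun ξ => gauss_nonneg ξ)

lemma stdNormalCDF_eq' (d : ℝ) :
    stdNormalCDF d = stdNormalCDF 0 + ∫ ξ in (0:ℝ)..d, gauss ξ := by
  have h : ∀ a : ℝ, stdNormalCDF a = ∫ ξ in Set.Iic a, gauss ξ := fun a => by
    rw [stdNormalCDF_eq_gauss]
    exact setIntegral_congr_set Iio_ae_eq_Iic
  rw [h, h, ← intervalIntegral.integral_Iic_sub_Iic integrable_gauss.integrableOn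
    integrable_gauss.integrableOn]
  ring

lemma hasDerivAt_stdNormalCDF (d : ℝ) : HasDerivAt stdNormalCDF (gauss d) d := by
  have h : HasDerivAt (fun u => stdNormalCDF 0 + ∫ ξ in (0:ℝ)..u, gauss ξ) (gauss d) d := by
    refine HasDerivAt.const_add _ ?_
    exact intervalIntegral.integral_hasDerivAt_right
      integrable_gauss.intervalIntegrable
      continuous_gauss.stronglyMeasurable.stronglyMeasurableAtFilter
      continuous_gauss.continuousAt
  have : stdNormalCDF = fun u => stdNormalCDF 0 + ∫ ξ in (0:ℝ)..u, gauss ξ :=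
    funext stdNormalCDF_eq'
  rw [this]
  exact h

lemma continuous_stdNormalCDF : Continuous stdNormalCDF := by
  have : ∀ d, ContinuousAt stdNormalCDF d := fun d =>
    (hasDerivAt_stdNormalCDF d).continuousAt
  exact continuous_iff_continuousAt.2 this

lemma stdNormalCDF_tail {d : ℝ} (hd : 0 ≤ d) : stdNormalCDF (-d) ≤ Real.exp (-d ^ 2 / 2) := by
  have key : ∀ ξ ∈ Set.Iio (-d), gauss ξ ≤ Real.exp (-d ^ 2 / 2) * gauss (ξ + d) := by
    intro ξ hξ
    have hξ'' : ξ < -d := hξ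
    have hξ' : ξ + d ≤ 0 := by linarith
    rw [gauss, gauss]
    rw [show Real.exp (-d ^ 2 / 2) * (Real.exp (-(ξ + d) ^ 2 / 2) / Real.sqrt (2 * Real.pi))
      = (Real.exp (-d ^ 2 / 2) * Real.exp (-(ξ + d) ^ 2 / 2)) / Real.sqrt (2 * Real.pi) by ring,
      ← Real.exp_add]
    have : -ξ ^ 2 / 2 ≤ -d ^ 2 / 2 + -(ξ + d) ^ 2 / 2 := by
      nlinarith [mul_nonneg hd (neg_nonneg.2 hξ')]
    have h2 := Real.exp_le_exp.2 this
    gcongr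
  have hint : Integrable (fun ξ => Real.exp (-d ^ 2 / 2) * gauss (ξ + d)) :=
    (integrable_gauss.comp_add_right d).const_mul _
  calc stdNormalCDF (-d) = ∫ ξ in Set.Iio (-d), gauss ξ := rfl
    _ ≤ ∫ ξ in Set.Iio (-d), Real.exp (-d ^ 2 / 2) * gauss (ξ + d) := by
        refine setIntegral_mono_on integrable_gauss.integrableOn hint.integrableOn
          measurableSet_Iio key
    _ ≤ ∫ ξ, Real.exp (-d ^ 2 / 2) * gauss (ξ + d) :=
        setIntegral_le_integral hint (Filter.Eventually.of_forall fun ξ =>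
          mul_nonneg (Real.exp_nonneg _) (gauss_nonneg _))
    _ = Real.exp (-d ^ 2 / 2) := by
        rw [integral_const_mul, integral_add_right_eq_self gauss d, integral_gauss, mul_one]

/-- Black–Scholes argument `d₁(τ,x) = (x + (r + σ²/2)τ)/(σ√τ)`. -/
noncomputable def dOne (σ r τ x : ℝ) : ℝ :=
  (x + (r + σ ^ 2 / 2) * τ) / (σ * Real.sqrt τ)

/-- `d₂ = d₁ − σ√τ`. -/
noncomputable def dTwo (σ r τ x : ℝ) : ℝ :=
  dOne σ r τ x - σ * Real.sqrt τ

/-- `w(τ,x) = e^{rτ}Φ(Ke^x) − u_BS(τ,x)` for a put option, written explicitly as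
`e^{rτ} K (1 − e^x)⁺ − K N(−d₂) + K e^{rτ+x} N(−d₁)`. -/
noncomputable def wPut (σ r K τ x : ℝ) : ℝ :=
  Real.exp (r * τ) * max (1 - Real.exp x) 0 * K -
    K * stdNormalCDF (-(dTwo σ r τ x)) +
    K * Real.exp (r * τ + x) * stdNormalCDF (-(dOne σ r τ x))

/-- derivative of `dOne` in `τ`. -/
noncomputable def dOne' (σ r τ x : ℝ) : ℝ :=
  ((r + σ ^ 2 / 2) * (σ * Real.sqrt τ) -
    (x + (r + σ ^ 2 / 2) * τ) * (σ * (1 / (2 * Real.sqrt τ)))) / (σ * Real.sqrt τ) ^ 2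

noncomputable def dTwo' (σ r τ x : ℝ) : ℝ :=
  dOne' σ r τ x - σ * (1 / (2 * Real.sqrt τ))

noncomputable def wDeriv (σ r K τ x : ℝ) : ℝ :=
  r * K * Real.exp (r * τ) *
      (max (1 - Real.exp x) 0 + Real.exp x * stdNormalCDF (-(dOne σ r τ x))) -
    K * σ / (2 * Real.sqrt τ) * gauss (dTwo σ r τ x)

section deriv
variable {σ r K x : ℝ} {τ : ℝ}

lemma sqrt_ne {τ : ℝ} (hτ : 0 < τ) : Real.sqrt τ ≠ 0 := (Real.sqrt_pos.2 hτ).ne'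

lemma hasDerivAt_sqrtfun (hτ : 0 < τ) (σ : ℝ) :
    HasDerivAt (fun t : ℝ => σ * Real.sqrt t) (σ * (1 / (2 * Real.sqrt τ))) τ :=
  (Real.hasDerivAt_sqrt hτ.ne').const_mul σ

lemma hasDerivAt_dOne (hσ : 0 < σ) (hτ : 0 < τ) :
    HasDerivAt (fun t => dOne σ r t x) (dOne' σ r τ x) τ := by
  have hnum : HasDerivAt (fun t : ℝ => x + (r + σ ^ 2 / 2) * t) (r + σ ^ 2 / 2) τ := by
    simpa using ((hasDerivAt_id τ).const_mul (r + σ ^ 2 / 2)).const_add x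
  exact hnum.div (hasDerivAt_sqrtfun hτ σ)
    (mul_ne_zero hσ.ne' (sqrt_ne hτ))

lemma hasDerivAt_dTwo (hσ : 0 < σ) (hτ : 0 < τ) :
    HasDerivAt (fun t => dTwo σ r t x) (dTwo' σ r τ x) τ :=
  (hasDerivAt_dOne hσ hτ).sub (hasDerivAt_sqrtfun hτ σ)

lemma gauss_relation (hσ : 0 < σ) (hτ : 0 < τ) :
    Real.exp (r * τ + x) * gauss (dOne σ r τ x) = gauss (dTwo σ r τ x) := by
  have hs : Real.sqrt τ ≠ 0 := sqrt_ne hτ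
  have hsq : Real.sqrt τ ^ 2 = τ := Real.sq_sqrt hτ.le
  have hd : dOne σ r τ x * (σ * Real.sqrt τ) = x + (r + σ ^ 2 / 2) * τ := by
    unfold dOne; field_simp
  rw [gauss, gauss, show Real.exp (r * τ + x) * (Real.exp (-dOne σ r τ x ^ 2 / 2) / Real.sqrt (2 * Real.pi))
      = Real.exp (r * τ + x) * Real.exp (-dOne σ r τ x ^ 2 / 2) / Real.sqrt (2 * Real.pi) by ring,
    ← Real.exp_add]
  congr 1
  rw [Real.exp_eq_exp]
  unfold dTwo
  linear_combination (-1 : ℝ) * hd + (σ ^ 2 / 2) * hsq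

lemma hasDerivAt_wPut (hσ : 0 < σ) (hτ : 0 < τ) :
    HasDerivAt (fun t => wPut σ r K t x) (wDeriv σ r K τ x) τ := by
  have hexp1 : HasDerivAt (fun t : ℝ => Real.exp (r * t)) (Real.exp (r * τ) * r) τ := by
    simpa using (((hasDerivAt_id τ).const_mul r).exp)
  have hexp2 : HasDerivAt (fun t : ℝ => Real.exp (r * t + x)) (Real.exp (r * τ + x) * r) τ := by
    simpa using ((((hasDerivAt_id τ).const_mul r).add_const x).exp)
  have hN1 : HasDerivAt (fun t => stdNormalCDF (-(dOne σ r t x)))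
      (gauss (-(dOne σ r τ x)) * (-(dOne' σ r τ x))) τ :=
    (hasDerivAt_stdNormalCDF _).comp τ (hasDerivAt_dOne hσ hτ).neg
  have hN2 : HasDerivAt (fun t => stdNormalCDF (-(dTwo σ r t x)))
      (gauss (-(dTwo σ r τ x)) * (-(dTwo' σ r τ x))) τ :=
    (hasDerivAt_stdNormalCDF _).comp τ (hasDerivAt_dTwo hσ hτ).neg
  have h1 : HasDerivAt (fun t => Real.exp (r * t) * max (1 - Real.exp x) 0 * K)
      (Real.exp (r * τ) * r * max (1 - Real.exp x) 0 * K) τ :=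
    (hexp1.mul_const _).mul_const _
  have h2 : HasDerivAt (fun t => K * stdNormalCDF (-(dTwo σ r t x)))
      (K * (gauss (-(dTwo σ r τ x)) * (-(dTwo' σ r τ x)))) τ := hN2.const_mul K
  have h3 : HasDerivAt (fun t => K * Real.exp (r * t + x) * stdNormalCDF (-(dOne σ r t x)))
      (K * (Real.exp (r * τ + x) * r) * stdNormalCDF (-(dOne σ r τ x)) +
        K * Real.exp (r * τ + x) * (gauss (-(dOne σ r τ x)) * (-(dOne' σ r τ x)))) τ :=
    (hexp2.const_mul K).mul hN1
  have htotal := (h1.sub h2).add h3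
  have : wPut σ r K = fun t x => Real.exp (r * t) * max (1 - Real.exp x) 0 * K -
      K * stdNormalCDF (-(dTwo σ r t x)) + K * Real.exp (r * t + x) * stdNormalCDF (-(dOne σ r t x)) := rfl
  refine HasDerivAt.congr_deriv (f := fun t => wPut σ r K t x) htotal ?_
  symm
  rw [wDeriv]
  have hkey := gauss_relation (r := r) (x := x) hσ hτ
  have heven1 : gauss (-(dOne σ r τ x)) = gauss (dOne σ r τ x) := gauss_even _
  have heven2 : gauss (-(dTwo σ r τ x)) = gauss (dTwo σ r τ x) := gauss_even _
  have hE : Real.exp (r * τ + x) = Real.exp (r * τ) * Real.exp x := Real.exp_add _ _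
  rw [heven1, heven2, dTwo']
  linear_combination (K * dOne' σ r τ x) * hkey -
    (r * K * stdNormalCDF (-(dOne σ r τ x))) * hE

end deriv

noncomputable def hfun (x : ℝ) : ℝ := Real.exp (min x 0) * max (1 - Real.exp x) 0

noncomputable def bfun (σ T x : ℝ) : ℝ :=
  Real.exp (x + min x 0 - (max x 0) ^ 2 / (2 * σ ^ 2 * T))

section bounds
variable {σ r K T x τ : ℝ}

lemma dOne_mul (hσ : 0 < σ) (hτ : 0 < τ) :
    dOne σ r τ x * (σ * Real.sqrt τ) = x + (r + σ ^ 2 / 2) * τ := by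
  unfold dOne
  field_simp

lemma dOne_sq_ge (hσ : 0 < σ) (hr : 0 ≤ r) (hτ : 0 < τ) (hx : 0 < x) :
    x ^ 2 / (σ ^ 2 * τ) ≤ dOne σ r τ x ^ 2 := by
  have hs : 0 < Real.sqrt τ := Real.sqrt_pos.2 hτ
  have hsq : Real.sqrt τ ^ 2 = τ := Real.sq_sqrt hτ.le
  have hd := dOne_mul (r := r) (x := x) hσ hτ
  have hrτ : 0 ≤ r * τ := mul_nonneg hr hτ.le
  have hq : 0 < σ ^ 2 * τ := by positivity
  have hds : dOne σ r τ x ^ 2 * (σ ^ 2 * τ) = (x + (r + σ ^ 2 / 2) * τ) ^ 2 := by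
    rw [← hd, mul_pow, mul_pow, hsq]
  rw [div_le_iff₀ hq]
  have h1 : (x + (r + σ ^ 2 / 2) * τ) ^ 2 ≥ x ^ 2 := by nlinarith
  linarith

lemma dOne_nonneg (hσ : 0 < σ) (hr : 0 ≤ r) (hτ : 0 < τ) (hx : 0 ≤ x) :
    0 ≤ dOne σ r τ x := by
  have hs : 0 < σ * Real.sqrt τ := by positivity
  exact div_nonneg (by nlinarith [mul_nonneg hr hτ.le]) hs.le

lemma exN_le (hσ : 0 < σ) (hr : 0 ≤ r) (hτ : 0 < τ) (hτT : τ ≤ T) :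
    Real.exp x * stdNormalCDF (-(dOne σ r τ x)) ≤ Real.exp (σ ^ 2 * T / 2) := by
  rcases le_or_gt x 0 with hx | hx
  · have h1 : Real.exp x ≤ 1 := Real.exp_le_one_iff.2 hx
    have h2 : stdNormalCDF (-(dOne σ r τ x)) ≤ 1 := stdNormalCDF_le_one _
    have h3 : (1:ℝ) ≤ Real.exp (σ ^ 2 * T / 2) := by
      rw [show (1:ℝ) = Real.exp 0 by simp]
      apply Real.exp_le_exp.2; nlinarith [sq_nonneg σ, hτ.trans_le hτT]
    nlinarith [stdNormalCDF_nonneg (-(dOne σ r τ x)), Real.exp_pos x]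
  · have hd0 : 0 ≤ dOne σ r τ x := dOne_nonneg hσ hr hτ hx.le
    have htail := stdNormalCDF_tail hd0
    have hsq := dOne_sq_ge (r := r) hσ hr hτ hx
    calc Real.exp x * stdNormalCDF (-(dOne σ r τ x))
        ≤ Real.exp x * Real.exp (-dOne σ r τ x ^ 2 / 2) := by
          exact mul_le_mul_of_nonneg_left htail (Real.exp_nonneg _)
      _ = Real.exp (x - dOne σ r τ x ^ 2 / 2) := by rw [← Real.exp_add]; ring_nf
      _ ≤ Real.exp (σ ^ 2 * T / 2) := by
          apply Real.exp_le_exp.2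
          have hq : 0 < σ ^ 2 * τ := by positivity
          have h3 : (2 * x - σ ^ 2 * τ) * (σ ^ 2 * τ) ≤ dOne σ r τ x ^ 2 * (σ ^ 2 * τ) := by
            rw [div_le_iff₀ hq] at hsq
            nlinarith [sq_nonneg (x - σ ^ 2 * τ)]
          have h4 : 2 * x - σ ^ 2 * τ ≤ dOne σ r τ x ^ 2 :=
            le_of_mul_le_mul_right h3 hq
          have h2 : σ ^ 2 * τ ≤ σ ^ 2 * T := by nlinarith [sq_nonneg σ]
          linarith
end bounds

section bounds2
variable {σ r K T x τ : ℝ}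

lemma emin_exN_le (hσ : 0 < σ) (hr : 0 ≤ r) (hτ : 0 < τ) (hτT : τ ≤ T) :
    Real.exp (min x 0) * (Real.exp x * stdNormalCDF (-(dOne σ r τ x))) ≤ bfun σ T x := by
  rcases le_or_gt x 0 with hx | hx
  · have h2 : Real.exp x * stdNormalCDF (-(dOne σ r τ x)) ≤ Real.exp x :=
      mul_le_of_le_one_right (Real.exp_nonneg x) (stdNormalCDF_le_one _)
    have h3 : Real.exp (min x 0) * (Real.exp x * stdNormalCDF (-(dOne σ r τ x)))
        ≤ Real.exp (min x 0) * Real.exp x :=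
      mul_le_mul_of_nonneg_left h2 (Real.exp_nonneg _)
    refine h3.trans (le_of_eq ?_)
    rw [bfun, min_eq_left hx, max_eq_right hx, ← Real.exp_add]
    norm_num
  · have hd0 : 0 ≤ dOne σ r τ x := dOne_nonneg hσ hr hτ hx.le
    have htail := stdNormalCDF_tail hd0
    have hsq := dOne_sq_ge (r := r) hσ hr hτ hx
    have hq : 0 < σ ^ 2 * τ := by positivity
    have h2 : Real.exp x * stdNormalCDF (-(dOne σ r τ x))
        ≤ Real.exp x * Real.exp (-dOne σ r τ x ^ 2 / 2) :=
      mul_le_mul_of_nonneg_left htail (Real.exp_nonneg _)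
    have h5 : Real.exp (min x 0) * (Real.exp x * stdNormalCDF (-(dOne σ r τ x)))
        = Real.exp x * stdNormalCDF (-(dOne σ r τ x)) := by
      rw [min_eq_right hx.le]; simp
    rw [h5, bfun, min_eq_right hx.le, max_eq_left hx.le]
    refine h2.trans ?_
    rw [← Real.exp_add]
    apply Real.exp_le_exp.2
    have h1 : x ^ 2 / (σ ^ 2 * τ) / 2 ≤ dOne σ r τ x ^ 2 / 2 := by linarith
    have h2' : x ^ 2 / (2 * σ ^ 2 * T) ≤ x ^ 2 / (2 * σ ^ 2 * τ) := by
      apply div_le_div_of_nonneg_left (sq_nonneg x) (by positivity)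
      nlinarith [sq_nonneg σ]
    have h3 : x ^ 2 / (2 * σ ^ 2 * τ) = x ^ 2 / (σ ^ 2 * τ) / 2 := by ring
    linarith

lemma P1_nonneg (hσ : 0 < σ) (hr : 0 ≤ r) (hK : 0 < K) (τ x : ℝ) :
    0 ≤ r * K * Real.exp (r * τ) *
      (max (1 - Real.exp x) 0 + Real.exp x * stdNormalCDF (-(dOne σ r τ x))) := by
  apply mul_nonneg (by positivity)
  have h1 := stdNormalCDF_nonneg (-(dOne σ r τ x))
  have h2 := Real.exp_nonneg x
  have h3 : (0:ℝ) ≤ max (1 - Real.exp x) 0 := le_max_right _ _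
  nlinarith

lemma P2_nonneg (hσ : 0 < σ) (hK : 0 < K) (hτ : 0 < τ) (x : ℝ) :
    0 ≤ K * σ / (2 * Real.sqrt τ) * gauss (dTwo σ r τ x) := by
  apply mul_nonneg _ (gauss_nonneg _)
  positivity

lemma hP1_bound (hσ : 0 < σ) (hr : 0 ≤ r) (hK : 0 < K) (hτ : 0 < τ) (hτT : τ ≤ T) :
    r * K * Real.exp (r * τ) *
      (max (1 - Real.exp x) 0 + Real.exp x * stdNormalCDF (-(dOne σ r τ x)))
      ≤ r * K * Real.exp (r * T) * (1 + Real.exp (σ ^ 2 * T / 2)) := by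
  have e1 : Real.exp (r * τ) ≤ Real.exp (r * T) :=
    Real.exp_le_exp.2 (by nlinarith)
  have e2 : max (1 - Real.exp x) 0 ≤ 1 :=
    max_le (by nlinarith [Real.exp_pos x]) zero_le_one
  have e3 := exN_le (σ := σ) (r := r) (T := T) (x := x) hσ hr hτ hτT
  have e4 : (0:ℝ) ≤ max (1 - Real.exp x) 0 := le_max_right _ _
  have e5 : 0 ≤ Real.exp x * stdNormalCDF (-(dOne σ r τ x)) :=
    mul_nonneg (Real.exp_nonneg x) (stdNormalCDF_nonneg _)
  have hrk : 0 ≤ r * K := mul_nonneg hr hK.le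
  gcongr

lemma wDeriv_abs_le (hσ : 0 < σ) (hr : 0 ≤ r) (hK : 0 < K) (hτ : 0 < τ) (hτT : τ ≤ T) :
    |wDeriv σ r K τ x| ≤ r * K * Real.exp (r * T) * (1 + Real.exp (σ ^ 2 * T / 2)) +
      K * σ * (Real.sqrt (2 * Real.pi))⁻¹ / 2 / Real.sqrt τ := by
  have h1 := P1_nonneg (σ := σ) (r := r) hσ hr hK τ x
  have h2 := P2_nonneg (σ := σ) (r := r) hσ hK hτ x
  have hP1 := hP1_bound (σ := σ) (r := r) (K := K) (x := x) hσ hr hK hτ hτT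
  have hP2 : K * σ / (2 * Real.sqrt τ) * gauss (dTwo σ r τ x)
      ≤ K * σ * (Real.sqrt (2 * Real.pi))⁻¹ / 2 / Real.sqrt τ := by
    have hs : 0 < Real.sqrt τ := Real.sqrt_pos.2 hτ
    have hg := gauss_le (dTwo σ r τ x)
    have hc : 0 < K * σ / (2 * Real.sqrt τ) := by positivity
    calc K * σ / (2 * Real.sqrt τ) * gauss (dTwo σ r τ x)
        ≤ K * σ / (2 * Real.sqrt τ) * (Real.sqrt (2 * Real.pi))⁻¹ :=
          mul_le_mul_of_nonneg_left hg hc.le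
      _ = K * σ * (Real.sqrt (2 * Real.pi))⁻¹ / 2 / Real.sqrt τ := by
          field_simp
  rw [wDeriv, abs_sub_le_iff]
  constructor <;> linarith

lemma wDeriv_weighted_le (hσ : 0 < σ) (hr : 0 ≤ r) (hK : 0 < K) (hτ : 0 < τ) (hτT : τ ≤ T) :
    Real.exp (min x 0) * |wDeriv σ r K τ x| ≤
      r * K * Real.exp (r * T) * (hfun x + bfun σ T x) +
        K * σ / (2 * Real.sqrt τ) * gauss (dTwo σ r τ x) := by
  have hm1 : Real.exp (min x 0) ≤ 1 := Real.exp_le_one_iff.2 (min_le_right x 0)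
  have hm0 : 0 ≤ Real.exp (min x 0) := Real.exp_nonneg _
  have h1 := P1_nonneg (σ := σ) (r := r) hσ hr hK τ x
  have h2 := P2_nonneg (σ := σ) (r := r) hσ hK hτ x
  have habs : |wDeriv σ r K τ x| ≤ r * K * Real.exp (r * τ) *
      (max (1 - Real.exp x) 0 + Real.exp x * stdNormalCDF (-(dOne σ r τ x))) +
      K * σ / (2 * Real.sqrt τ) * gauss (dTwo σ r τ x) := by
    rw [wDeriv, abs_sub_le_iff]; constructor <;> linarith
  have step1 : Real.exp (min x 0) * |wDeriv σ r K τ x| ≤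
      Real.exp (min x 0) * (r * K * Real.exp (r * τ) *
        (max (1 - Real.exp x) 0 + Real.exp x * stdNormalCDF (-(dOne σ r τ x)))) +
      K * σ / (2 * Real.sqrt τ) * gauss (dTwo σ r τ x) := by
    have hh := mul_le_mul_of_nonneg_left habs hm0
    have h2' : Real.exp (min x 0) * (K * σ / (2 * Real.sqrt τ) * gauss (dTwo σ r τ x))
        ≤ K * σ / (2 * Real.sqrt τ) * gauss (dTwo σ r τ x) :=
      mul_le_of_le_one_left h2 hm1
    calc Real.exp (min x 0) * |wDeriv σ r K τ x|
        ≤ Real.exp (min x 0) * (r * K * Real.exp (r * τ) *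
            (max (1 - Real.exp x) 0 + Real.exp x * stdNormalCDF (-(dOne σ r τ x))) +
          K * σ / (2 * Real.sqrt τ) * gauss (dTwo σ r τ x)) := hh
      _ = Real.exp (min x 0) * (r * K * Real.exp (r * τ) *
            (max (1 - Real.exp x) 0 + Real.exp x * stdNormalCDF (-(dOne σ r τ x)))) +
          Real.exp (min x 0) * (K * σ / (2 * Real.sqrt τ) * gauss (dTwo σ r τ x)) := by ring
      _ ≤ _ := by linarith
  refine step1.trans ?_
  have main : Real.exp (min x 0) * (r * K * Real.exp (r * τ) *
      (max (1 - Real.exp x) 0 + Real.exp x * stdNormalCDF (-(dOne σ r τ x))))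
      ≤ r * K * Real.exp (r * T) * (hfun x + bfun σ T x) := by
    have e1 : Real.exp (r * τ) ≤ Real.exp (r * T) := Real.exp_le_exp.2 (by nlinarith)
    have e3 := emin_exN_le (σ := σ) (r := r) (T := T) (x := x) hσ hr hτ hτT
    have expand : Real.exp (min x 0) * (r * K * Real.exp (r * τ) *
        (max (1 - Real.exp x) 0 + Real.exp x * stdNormalCDF (-(dOne σ r τ x))))
        = r * K * Real.exp (r * τ) * (Real.exp (min x 0) * max (1 - Real.exp x) 0
          + Real.exp (min x 0) * (Real.exp x * stdNormalCDF (-(dOne σ r τ x)))) := by ring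
    rw [expand]
    have hrk : 0 ≤ r * K := mul_nonneg hr hK.le
    have hfh : 0 ≤ Real.exp (min x 0) * max (1 - Real.exp x) 0 :=
      mul_nonneg (Real.exp_nonneg _) (le_max_right _ _)
    have hb0 : 0 ≤ Real.exp (min x 0) * (Real.exp x * stdNormalCDF (-(dOne σ r τ x))) :=
      mul_nonneg (Real.exp_nonneg _)
        (mul_nonneg (Real.exp_nonneg _) (stdNormalCDF_nonneg _))
    have e2 : Real.exp (min x 0) * max (1 - Real.exp x) 0 ≤ hfun x := le_of_eq rfl
    gcongr
  linarith
end bounds2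

section integr
variable {σ r K T τ₁ τ₂ : ℝ}

lemma continuous_hfun : Continuous hfun := by unfold hfun; fun_prop

lemma hfun_nonneg (x : ℝ) : 0 ≤ hfun x :=
  mul_nonneg (Real.exp_nonneg _) (le_max_right _ _)

lemma bfun_nonneg (σ T x : ℝ) : 0 ≤ bfun σ T x := Real.exp_nonneg _

lemma continuous_bfun (σ T : ℝ) : Continuous (bfun σ T) := by unfold bfun; fun_prop

lemma integrable_hfun : Integrable hfun := by
  rw [← integrableOn_univ, ← Set.Iic_union_Ioi (a := (0:ℝ))]
  apply IntegrableOn.union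
  · refine Integrable.mono (integrableOn_exp_Iic 0)
      continuous_hfun.aestronglyMeasurable.restrict ?_
    rw [ae_restrict_iff' measurableSet_Iic]
    refine Filter.Eventually.of_forall fun x hx => ?_
    rw [Real.norm_eq_abs, Real.norm_eq_abs, abs_of_nonneg (hfun_nonneg x),
      abs_of_nonneg (Real.exp_nonneg x)]
    have h1 : max (1 - Real.exp x) 0 ≤ 1 :=
      max_le (by nlinarith [Real.exp_pos x]) zero_le_one
    have h2 : Real.exp (min x 0) ≤ Real.exp x := by
      rw [min_eq_left hx]
    calc hfun x ≤ Real.exp (min x 0) * 1 :=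
          mul_le_mul_of_nonneg_left h1 (Real.exp_nonneg _)
      _ ≤ Real.exp x := by rw [mul_one]; exact h2
  · have hz : ∀ x ∈ Set.Ioi (0:ℝ), hfun x = 0 := by
      intro x hx
      have hx' : (0:ℝ) < x := hx
      have h1 : 1 - Real.exp x ≤ 0 := by
        have := Real.add_one_le_exp x; linarith
      rw [hfun, max_eq_right h1, mul_zero]
    exact (integrableOn_congr_fun hz measurableSet_Ioi).2 integrableOn_zero

lemma integrable_bfun (hσ : 0 < σ) (hT : 0 < T) : Integrable (bfun σ T) := by
  rw [← integrableOn_univ, ← Set.Iic_union_Ioi (a := (0:ℝ))]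
  apply IntegrableOn.union
  · refine Integrable.mono (integrableOn_exp_Iic 0)
      (continuous_bfun σ T).aestronglyMeasurable.restrict ?_
    rw [ae_restrict_iff' measurableSet_Iic]
    refine Filter.Eventually.of_forall fun x hx => ?_
    rw [Real.norm_eq_abs, Real.norm_eq_abs, abs_of_nonneg (bfun_nonneg σ T x),
      abs_of_nonneg (Real.exp_nonneg x)]
    rw [bfun, min_eq_left hx, max_eq_right hx]
    apply Real.exp_le_exp.2
    have : 0 ^ 2 / (2 * σ ^ 2 * T) = (0:ℝ) := by simp
    rw [this]
    have hx' : x ≤ (0:ℝ) := hx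
    linarith
  · set s2 : ℝ := σ ^ 2 * T with hs2
    have hs2pos : 0 < s2 := by positivity
    have hint : Integrable (fun x : ℝ => Real.exp (s2 / 2) *
        Real.exp (-(1 / (2 * s2)) * (x - s2) ^ 2)) := by
      exact ((integrable_exp_neg_mul_sq (by positivity)).comp_sub_right s2).const_mul _
    refine Integrable.mono hint.integrableOn
      (continuous_bfun σ T).aestronglyMeasurable.restrict ?_
    rw [ae_restrict_iff' measurableSet_Ioi]
    refine Filter.Eventually.of_forall fun x hx => ?_
    have hx' : (0:ℝ) < x := hx
    rw [Real.norm_eq_abs, Real.norm_eq_abs, abs_of_nonneg (bfun_nonneg σ T x),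
      abs_of_nonneg (by positivity)]
    rw [bfun, min_eq_right hx'.le, max_eq_left hx'.le, ← Real.exp_add]
    apply le_of_eq
    congr 1
    field_simp
    ring
end integr

section integr2
variable {σ r K T τ₁ τ₂ t x : ℝ}

lemma dTwo_eq_aff (hσ : 0 < σ) (ht : 0 < t) (x : ℝ) :
    dTwo σ r t x = (x + (r - σ ^ 2 / 2) * t) / (σ * Real.sqrt t) := by
  have hs : Real.sqrt t ≠ 0 := (Real.sqrt_pos.2 ht).ne'
  have hsq : Real.sqrt t ^ 2 = t := Real.sq_sqrt ht.le
  rw [dTwo, dOne, div_sub' (mul_ne_zero hσ.ne' hs)]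
  congr 1
  linear_combination (-(σ ^ 2) : ℝ) * hsq

lemma integrable_gauss_aff {s c : ℝ} (hs : s ≠ 0) :
    Integrable (fun x : ℝ => gauss ((x + c) / s)) := by
  have h1 : Integrable (fun y : ℝ => gauss (s⁻¹ * y)) :=
    integrable_gauss.comp_mul_left' (inv_ne_zero hs)
  have h2 := h1.comp_add_right c
  refine h2.congr (Filter.Eventually.of_forall fun x => ?_)
  show gauss (s⁻¹ * (x + c)) = gauss ((x + c) / s)
  rw [div_eq_inv_mul]

lemma integral_gauss_aff {s c : ℝ} (hs : 0 < s) :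
    ∫ x : ℝ, gauss ((x + c) / s) = s := by
  have h1 : ∫ x : ℝ, gauss ((x + c) / s) = ∫ x : ℝ, (fun y => gauss (y / s)) (x + c) := rfl
  rw [h1, integral_add_right_eq_self (fun y => gauss (y / s)) c,
    Measure.integral_comp_div (fun y => gauss y) s, integral_gauss,
    abs_of_pos hs, smul_eq_mul, mul_one]

lemma integrable_gauss_dTwo (hσ : 0 < σ) (ht : 0 < t) :
    Integrable (fun x => gauss (dTwo σ r t x)) := by
  have hs : (0:ℝ) < σ * Real.sqrt t := by positivity
  refine (integrable_gauss_aff (s := σ * Real.sqrt t) (c := (r - σ ^ 2 / 2) * t)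
    hs.ne').congr (Filter.Eventually.of_forall fun x => ?_)
  show gauss _ = gauss (dTwo σ r t x)
  exact congrArg gauss (dTwo_eq_aff hσ ht x).symm

lemma integral_gauss_dTwo (hσ : 0 < σ) (ht : 0 < t) :
    ∫ x : ℝ, gauss (dTwo σ r t x) = σ * Real.sqrt t := by
  have hs : (0:ℝ) < σ * Real.sqrt t := by positivity
  rw [show (fun x => gauss (dTwo σ r t x))
      = fun x => gauss ((x + (r - σ ^ 2 / 2) * t) / (σ * Real.sqrt t)) from
    funext fun x => by rw [dTwo_eq_aff hσ ht]]
  exact integral_gauss_aff hs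

/-- `∫ (A + B/√t) = A Δ + 2B(√τ₁ − √τ₂)` -/
lemma integral_one_over_sqrt (A B : ℝ) (h2 : 0 < τ₂) (hle : τ₂ ≤ τ₁) :
    ∫ t in τ₂..τ₁, (A + B / Real.sqrt t) =
      A * (τ₁ - τ₂) + B * 2 * (Real.sqrt τ₁ - Real.sqrt τ₂) := by
  have h1 : 0 < τ₁ := lt_of_lt_of_le h2 hle
  have hsub : Set.uIcc τ₂ τ₁ ⊆ {u : ℝ | 0 < u} := by
    rw [Set.uIcc_of_le hle]
    intro u hu
    exact lt_of_lt_of_le h2 hu.1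
  have hderiv : ∀ u ∈ Set.uIcc τ₂ τ₁,
      HasDerivAt (fun v => A * v + B * 2 * Real.sqrt v) (A + B / Real.sqrt u) u := by
    intro u hu
    have hu0 : 0 < u := hsub hu
    have h := ((hasDerivAt_id u).const_mul A).add
      ((Real.hasDerivAt_sqrt hu0.ne').const_mul (B * 2))
    refine h.congr_deriv ?_
    have : Real.sqrt u ≠ 0 := (Real.sqrt_pos.2 hu0).ne'
    field_simp
  have hint : IntervalIntegrable (fun u => A + B / Real.sqrt u) volume τ₂ τ₁ := by
    apply ContinuousOn.intervalIntegrable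
    refine continuousOn_const.add (continuousOn_const.div
      (Real.continuous_sqrt.continuousOn) fun u hu => ?_)
    exact (Real.sqrt_pos.2 (hsub hu)).ne'
  have := intervalIntegral.integral_eq_sub_of_hasDerivAt hderiv hint
  rw [this]
  ring

end integr2

section cont
variable {σ r K T τ₁ τ₂ x : ℝ}

lemma continuousOn_dOne_t (hσ : 0 < σ) (x : ℝ) :
    ContinuousOn (fun t => dOne σ r t x) {t : ℝ | 0 < t} := by
  apply ContinuousOn.div
  · fun_prop
  · fun_prop
  · intro t ht
    have : (0:ℝ) < t := ht
    positivity

lemma continuousOn_dTwo_t (hσ : 0 < σ) (x : ℝ) :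
    ContinuousOn (fun t => dTwo σ r t x) {t : ℝ | 0 < t} :=
  (continuousOn_dOne_t hσ x).sub (by fun_prop)

lemma continuousOn_wDeriv_t (hσ : 0 < σ) (x : ℝ) :
    ContinuousOn (fun t => wDeriv σ r K t x) {t : ℝ | 0 < t} := by
  unfold wDeriv
  apply ContinuousOn.sub
  · apply ContinuousOn.mul (by fun_prop)
    apply ContinuousOn.add continuousOn_const
    exact continuousOn_const.mul
      (continuous_stdNormalCDF.comp_continuousOn (continuousOn_dOne_t hσ x).neg)
  · apply ContinuousOn.mul
    · apply ContinuousOn.div continuousOn_const (by fun_prop)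
      intro t ht
      have : (0:ℝ) < t := ht
      positivity
    · exact continuous_gauss.comp_continuousOn (continuousOn_dTwo_t hσ x)

lemma uIcc_subset_pos (h2 : 0 < τ₂) (hle : τ₂ ≤ τ₁) :
    Set.uIcc τ₂ τ₁ ⊆ {t : ℝ | 0 < t} := by
  rw [Set.uIcc_of_le hle]
  exact fun t ht => lt_of_lt_of_le h2 ht.1

lemma wdiff_eq (hσ : 0 < σ) (h2 : 0 < τ₂) (hle : τ₂ ≤ τ₁) (x : ℝ) :
    wPut σ r K τ₁ x - wPut σ r K τ₂ x = ∫ t in τ₂..τ₁, wDeriv σ r K t x := by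
  symm
  apply intervalIntegral.integral_eq_sub_of_hasDerivAt
  · exact fun t ht => hasDerivAt_wPut hσ (uIcc_subset_pos h2 hle ht)
  · exact ((continuousOn_wDeriv_t hσ x).mono (uIcc_subset_pos h2 hle)).intervalIntegrable

lemma sqrt_add_le' {a b : ℝ} (ha : 0 ≤ a) (hb : 0 ≤ b) :
    Real.sqrt (a + b) ≤ Real.sqrt a + Real.sqrt b := by
  have h : a + b ≤ (Real.sqrt a + Real.sqrt b) ^ 2 := by
    nlinarith [Real.sq_sqrt ha, Real.sq_sqrt hb, Real.sqrt_nonneg a, Real.sqrt_nonneg b,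
      mul_nonneg (Real.sqrt_nonneg a) (Real.sqrt_nonneg b)]
  calc Real.sqrt (a + b) ≤ Real.sqrt ((Real.sqrt a + Real.sqrt b) ^ 2) :=
        Real.sqrt_le_sqrt h
    _ = Real.sqrt a + Real.sqrt b := Real.sqrt_sq (by positivity)

lemma sqrt_sub_sqrt_le {a b : ℝ} (hb : 0 ≤ b) (hle : b ≤ a) :
    Real.sqrt a - Real.sqrt b ≤ Real.sqrt (a - b) := by
  have h := sqrt_add_le' hb (sub_nonneg.2 hle)
  rw [add_sub_cancel] at h
  linarith
end cont

section p1
variable {σ r K T τ₁ τ₂ x : ℝ}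

/-- sup-norm estimate (P1). -/
lemma wdiff_abs_le (hσ : 0 < σ) (hr : 0 ≤ r) (hK : 0 < K) (hT : 0 < T)
    (h2 : 0 < τ₂) (hlt : τ₂ < τ₁) (h1T : τ₁ ≤ T) (x : ℝ) :
    |wPut σ r K τ₁ x - wPut σ r K τ₂ x| ≤
      (r * K * Real.exp (r * T) * (1 + Real.exp (σ ^ 2 * T / 2)) * Real.sqrt T +
        K * σ * (Real.sqrt (2 * Real.pi))⁻¹) * Real.sqrt (τ₁ - τ₂) := by
  set A := r * K * Real.exp (r * T) * (1 + Real.exp (σ ^ 2 * T / 2)) with hA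
  set B := K * σ * (Real.sqrt (2 * Real.pi))⁻¹ / 2 with hB
  have hle := hlt.le
  have hsub := uIcc_subset_pos h2 hle
  have hAnn : 0 ≤ A := by
    rw [hA]; positivity
  have hBnn : 0 ≤ B := by rw [hB]; positivity
  have hintw : IntervalIntegrable (fun t => |wDeriv σ r K t x|) volume τ₂ τ₁ :=
    (((continuousOn_wDeriv_t hσ x).mono hsub).abs).intervalIntegrable
  have hintg : IntervalIntegrable (fun t => A + B / Real.sqrt t) volume τ₂ τ₁ := by
    apply ContinuousOn.intervalIntegrable
    refine continuousOn_const.add (continuousOn_const.div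
      Real.continuous_sqrt.continuousOn fun t ht => ?_)
    exact (Real.sqrt_pos.2 (hsub ht)).ne'
  rw [wdiff_eq hσ h2 hle x]
  calc |∫ t in τ₂..τ₁, wDeriv σ r K t x|
      ≤ ∫ t in τ₂..τ₁, |wDeriv σ r K t x| :=
        intervalIntegral.abs_integral_le_integral_abs hle
    _ ≤ ∫ t in τ₂..τ₁, (A + B / Real.sqrt t) := by
        apply intervalIntegral.integral_mono_on hle hintw hintg
        intro t ht
        exact wDeriv_abs_le hσ hr hK (lt_of_lt_of_le h2 ht.1) (le_trans ht.2 h1T)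
    _ = A * (τ₁ - τ₂) + B * 2 * (Real.sqrt τ₁ - Real.sqrt τ₂) :=
        integral_one_over_sqrt A B h2 hle
    _ ≤ (A * Real.sqrt T + 2 * B) * Real.sqrt (τ₁ - τ₂) := by
        have hΔ : 0 < τ₁ - τ₂ := by linarith
        have hΔT : τ₁ - τ₂ ≤ T := by linarith
        have e1 : τ₁ - τ₂ ≤ Real.sqrt T * Real.sqrt (τ₁ - τ₂) := by
          nlinarith [Real.mul_self_sqrt hΔ.le, Real.sqrt_le_sqrt hΔT,
            Real.sqrt_nonneg (τ₁ - τ₂), Real.sqrt_nonneg T]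
        have e2 : Real.sqrt τ₁ - Real.sqrt τ₂ ≤ Real.sqrt (τ₁ - τ₂) :=
          sqrt_sub_sqrt_le h2.le hle
        nlinarith [Real.sqrt_nonneg (τ₁ - τ₂)]
    _ = (A * Real.sqrt T + K * σ * (Real.sqrt (2 * Real.pi))⁻¹) * Real.sqrt (τ₁ - τ₂) := by
        rw [hB]; ring
end p1

section fub
variable {σ r K T τ₁ τ₂ : ℝ}

lemma gterm_nonneg (hσ : 0 < σ) (hK : 0 < K) (t x : ℝ) :
    0 ≤ K * σ / (2 * Real.sqrt t) * gauss (dTwo σ r t x) := by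
  apply mul_nonneg _ (gauss_nonneg _)
  have := Real.sqrt_nonneg t
  positivity

lemma inner_val (hσ : 0 < σ) (hK : 0 < K) {t : ℝ} (ht : 0 < t) (r : ℝ) :
    ∫ x : ℝ, K * σ / (2 * Real.sqrt t) * gauss (dTwo σ r t x) = K * σ ^ 2 / 2 := by
  rw [integral_const_mul, integral_gauss_dTwo hσ ht]
  have hs : Real.sqrt t ≠ 0 := (Real.sqrt_pos.2 ht).ne'
  field_simp

lemma prod_integrable (hσ : 0 < σ) (hK : 0 < K) (h2 : 0 < τ₂) (hle : τ₂ ≤ τ₁) (r : ℝ) :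
    Integrable (Function.uncurry fun t x : ℝ =>
        K * σ / (2 * Real.sqrt t) * gauss (dTwo σ r t x))
      ((volume.restrict (Set.Ioc τ₂ τ₁)).prod volume) := by
  set g : ℝ × ℝ → ℝ := fun z => K * σ / (2 * Real.sqrt z.1) * gauss (dTwo σ r z.1 z.2)
    with hg
  have hmeaseq : (volume.restrict (Set.Ioc τ₂ τ₁)).prod volume
      = (volume.prod volume).restrict ((Set.Ioc τ₂ τ₁) ×ˢ (Set.univ : Set ℝ)) := by
    rw [← Measure.prod_restrict, Measure.restrict_univ]
  have hcont : ContinuousOn g ((Set.Ioc τ₂ τ₁) ×ˢ (Set.univ : Set ℝ)) := by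
    have hpos : ∀ z : ℝ × ℝ, z ∈ (Set.Ioc τ₂ τ₁) ×ˢ (Set.univ : Set ℝ) → 0 < z.1 :=
      fun z hz => lt_of_lt_of_le h2 (hz.1.1.le)
    have hsqrt : ContinuousOn (fun z : ℝ × ℝ => Real.sqrt z.1)
        ((Set.Ioc τ₂ τ₁) ×ˢ (Set.univ : Set ℝ)) := by fun_prop
    have hd1 : ContinuousOn (fun z : ℝ × ℝ => dOne σ r z.1 z.2)
        ((Set.Ioc τ₂ τ₁) ×ˢ (Set.univ : Set ℝ)) := by
      unfold dOne
      apply ContinuousOn.div (by fun_prop) (by fun_prop)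
      intro z hz
      have := hpos z hz
      positivity
    have hd2 : ContinuousOn (fun z : ℝ × ℝ => dTwo σ r z.1 z.2)
        ((Set.Ioc τ₂ τ₁) ×ˢ (Set.univ : Set ℝ)) := by
      unfold dTwo
      exact hd1.sub (by fun_prop)
    apply ContinuousOn.mul
    · apply ContinuousOn.div continuousOn_const (by fun_prop)
      intro z hz
      have := hpos z hz
      positivity
    · exact continuous_gauss.comp_continuousOn hd2
  have hmeas : AEStronglyMeasurable g ((volume.restrict (Set.Ioc τ₂ τ₁)).prod volume) := by
    rw [hmeaseq]
    exact hcont.aestronglyMeasurable (measurableSet_Ioc.prod MeasurableSet.univ)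
  refine (integrable_prod_iff hmeas).2 ⟨?_, ?_⟩
  · rw [ae_restrict_iff' measurableSet_Ioc]
    refine Filter.Eventually.of_forall fun t ht => ?_
    show Integrable (fun x : ℝ => K * σ / (2 * Real.sqrt t) * gauss (dTwo σ r t x)) volume
    exact (integrable_gauss_dTwo hσ (lt_of_lt_of_le h2 ht.1.le)).const_mul _
  · have hconst : Integrable (fun _ : ℝ => K * σ ^ 2 / 2)
        (volume.restrict (Set.Ioc τ₂ τ₁)) := by
      refine (integrableOn_const_iff (C := K * σ ^ 2 / 2)).2 (Or.inr ?_)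
      rw [Real.volume_Ioc]
      exact ENNReal.ofReal_lt_top
    refine hconst.congr ?_
    rw [Filter.EventuallyEq, ae_restrict_iff' measurableSet_Ioc]
    refine Filter.Eventually.of_forall fun t ht => ?_
    have ht0 : 0 < t := lt_of_lt_of_le h2 ht.1.le
    have : ∀ x : ℝ, ‖g (t, x)‖ = g (t, x) := fun x =>
      Real.norm_of_nonneg (gterm_nonneg hσ hK t x)
    calc (K * σ ^ 2 / 2 : ℝ) = ∫ x : ℝ, g (t, x) := (inner_val hσ hK ht0 r).symm
      _ = ∫ x : ℝ, ‖g (t, x)‖ := by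
          refine integral_congr_ae (Filter.Eventually.of_forall fun x => (this x).symm)

lemma T3_integrable (hσ : 0 < σ) (hK : 0 < K) (h2 : 0 < τ₂) (hle : τ₂ ≤ τ₁) (r : ℝ) :
    Integrable (fun x : ℝ => ∫ t in Set.Ioc τ₂ τ₁,
      K * σ / (2 * Real.sqrt t) * gauss (dTwo σ r t x)) := by
  exact (prod_integrable hσ hK h2 hle r).integral_prod_right

lemma T3_integral (hσ : 0 < σ) (hK : 0 < K) (h2 : 0 < τ₂) (hle : τ₂ ≤ τ₁) (r : ℝ) :
    ∫ x : ℝ, (∫ t in Set.Ioc τ₂ τ₁, K * σ / (2 * Real.sqrt t) * gauss (dTwo σ r t x))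
      = K * σ ^ 2 / 2 * (τ₁ - τ₂) := by
  have hswap := integral_integral_swap (prod_integrable hσ hK h2 hle r)
  rw [← hswap]
  have hae : (fun t => ∫ x : ℝ, K * σ / (2 * Real.sqrt t) * gauss (dTwo σ r t x))
      =ᵐ[volume.restrict (Set.Ioc τ₂ τ₁)] fun _ => K * σ ^ 2 / 2 := by
    rw [Filter.EventuallyEq, ae_restrict_iff' measurableSet_Ioc]
    exact Filter.Eventually.of_forall fun t ht =>
      inner_val hσ hK (lt_of_lt_of_le h2 ht.1.le) r
  rw [integral_congr_ae hae, integral_const]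
  simp only [measureReal_def, Measure.restrict_apply, MeasurableSet.univ, Set.univ_inter]
  rw [Real.volume_Ioc, ENNReal.toReal_ofReal (by linarith : (0:ℝ) ≤ τ₁ - τ₂)]
  rw [smul_eq_mul]
  ring
end fub

section keyest
variable {σ r K T τ₁ τ₂ : ℝ}

lemma psi_pointwise (hσ : 0 < σ) (hr : 0 ≤ r) (hK : 0 < K)
    (h2 : 0 < τ₂) (hlt : τ₂ < τ₁) (h1T : τ₁ ≤ T) (x : ℝ) :
    Real.exp (min x 0) * |wPut σ r K τ₁ x - wPut σ r K τ₂ x| ≤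
      r * K * Real.exp (r * T) * (τ₁ - τ₂) * (hfun x + bfun σ T x) +
        ∫ t in Set.Ioc τ₂ τ₁, K * σ / (2 * Real.sqrt t) * gauss (dTwo σ r t x) := by
  have hle := hlt.le
  have hsub := uIcc_subset_pos h2 hle
  have hm0 : 0 ≤ Real.exp (min x 0) := Real.exp_nonneg _
  have hgcont : ContinuousOn
      (fun t => K * σ / (2 * Real.sqrt t) * gauss (dTwo σ r t x)) {t : ℝ | 0 < t} := by
    apply ContinuousOn.mul
    · apply ContinuousOn.div continuousOn_const (by fun_prop)
      intro t ht
      have : (0:ℝ) < t := ht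
      positivity
    · exact continuous_gauss.comp_continuousOn (continuousOn_dTwo_t hσ x)
  have hint1 : IntervalIntegrable
      (fun t => Real.exp (min x 0) * |wDeriv σ r K t x|) volume τ₂ τ₁ :=
    ((((continuousOn_wDeriv_t (K := K) hσ x).mono hsub).abs).intervalIntegrable).const_mul _
  have hint2 : IntervalIntegrable (fun t => r * K * Real.exp (r * T) * (hfun x + bfun σ T x)
      + K * σ / (2 * Real.sqrt t) * gauss (dTwo σ r t x)) volume τ₂ τ₁ :=
    (intervalIntegrable_const).add ((hgcont.mono hsub).intervalIntegrable)
  have step1 : Real.exp (min x 0) * |wPut σ r K τ₁ x - wPut σ r K τ₂ x| ≤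
      ∫ t in τ₂..τ₁, Real.exp (min x 0) * |wDeriv σ r K t x| := by
    rw [wdiff_eq hσ h2 hle x, intervalIntegral.integral_const_mul]
    exact mul_le_mul_of_nonneg_left
      (intervalIntegral.abs_integral_le_integral_abs hle) hm0
  have step2 : (∫ t in τ₂..τ₁, Real.exp (min x 0) * |wDeriv σ r K t x|) ≤
      ∫ t in τ₂..τ₁, (r * K * Real.exp (r * T) * (hfun x + bfun σ T x)
        + K * σ / (2 * Real.sqrt t) * gauss (dTwo σ r t x)) := by
    apply intervalIntegral.integral_mono_on hle hint1 hint2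
    intro t ht
    exact wDeriv_weighted_le hσ hr hK (lt_of_lt_of_le h2 ht.1) (le_trans ht.2 h1T)
  have step3 : (∫ t in τ₂..τ₁, (r * K * Real.exp (r * T) * (hfun x + bfun σ T x)
      + K * σ / (2 * Real.sqrt t) * gauss (dTwo σ r t x)))
      = r * K * Real.exp (r * T) * (τ₁ - τ₂) * (hfun x + bfun σ T x)
        + ∫ t in Set.Ioc τ₂ τ₁, K * σ / (2 * Real.sqrt t) * gauss (dTwo σ r t x) := by
    rw [intervalIntegral.integral_add intervalIntegrable_const
      ((hgcont.mono hsub).intervalIntegrable), intervalIntegral.integral_const,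
      intervalIntegral.integral_of_le hle]
    rw [smul_eq_mul]
    ring
  linarith

lemma key_estimate (hσ : 0 < σ) (hr : 0 ≤ r) (hK : 0 < K) (hT : 0 < T) :
    ∃ M₁ M₂ : ℝ, 1 ≤ M₁ ∧ 1 ≤ M₂ ∧ ∀ τ₁ τ₂ : ℝ, 0 < τ₂ → τ₂ < τ₁ → τ₁ ≤ T →
      (∀ x, Real.exp (min x 0) * |wPut σ r K τ₁ x - wPut σ r K τ₂ x| ≤
        M₁ * Real.sqrt (τ₁ - τ₂)) ∧
      ∃ Ψ : ℝ → ℝ, Integrable Ψ ∧ (∀ x, 0 ≤ Ψ x) ∧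
        (∀ x, Real.exp (min x 0) * |wPut σ r K τ₁ x - wPut σ r K τ₂ x| ≤ Ψ x) ∧
        ∫ x, Ψ x ≤ M₂ * (τ₁ - τ₂) := by
  set c1 := r * K * Real.exp (r * T) with hc1
  have hc1nn : 0 ≤ c1 := by rw [hc1]; positivity
  set M₁ := max 1 (c1 * (1 + Real.exp (σ ^ 2 * T / 2)) * Real.sqrt T +
    K * σ * (Real.sqrt (2 * Real.pi))⁻¹) with hM₁
  set M₂ := max 1 (c1 * (∫ y, (hfun y + bfun σ T y)) + K * σ ^ 2 / 2) with hM₂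
  refine ⟨M₁, M₂, le_max_left _ _, le_max_left _ _, fun τ₁ τ₂ h2 hlt h1T => ?_⟩
  have hle := hlt.le
  have hΔ : 0 < τ₁ - τ₂ := by linarith
  have hhb : Integrable (fun x => hfun x + bfun σ T x) volume :=
    integrable_hfun.add (integrable_bfun hσ hT)
  constructor
  · intro x
    have h1 := wdiff_abs_le (T := T) hσ hr hK hT h2 hlt h1T x
    have hm1 : Real.exp (min x 0) ≤ 1 := Real.exp_le_one_iff.2 (min_le_right x 0)
    have habs : (0:ℝ) ≤ |wPut σ r K τ₁ x - wPut σ r K τ₂ x| := abs_nonneg _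
    have step : Real.exp (min x 0) * |wPut σ r K τ₁ x - wPut σ r K τ₂ x|
        ≤ |wPut σ r K τ₁ x - wPut σ r K τ₂ x| :=
      mul_le_of_le_one_left habs hm1
    have hMle : c1 * (1 + Real.exp (σ ^ 2 * T / 2)) * Real.sqrt T +
        K * σ * (Real.sqrt (2 * Real.pi))⁻¹ ≤ M₁ := le_max_right _ _
    have hs : 0 ≤ Real.sqrt (τ₁ - τ₂) := Real.sqrt_nonneg _
    calc Real.exp (min x 0) * |wPut σ r K τ₁ x - wPut σ r K τ₂ x|
        ≤ |wPut σ r K τ₁ x - wPut σ r K τ₂ x| := step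
      _ ≤ (c1 * (1 + Real.exp (σ ^ 2 * T / 2)) * Real.sqrt T +
          K * σ * (Real.sqrt (2 * Real.pi))⁻¹) * Real.sqrt (τ₁ - τ₂) := h1
      _ ≤ M₁ * Real.sqrt (τ₁ - τ₂) := mul_le_mul_of_nonneg_right hMle hs
  · refine ⟨fun x => c1 * (τ₁ - τ₂) * (hfun x + bfun σ T x) +
      ∫ t in Set.Ioc τ₂ τ₁, K * σ / (2 * Real.sqrt t) * gauss (dTwo σ r t x), ?_, ?_, ?_, ?_⟩
    · exact (hhb.const_mul _).add (T3_integrable hσ hK h2 hle r)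
    · intro x
      have h1 : 0 ≤ c1 * (τ₁ - τ₂) * (hfun x + bfun σ T x) := by
        apply mul_nonneg (mul_nonneg hc1nn hΔ.le)
        exact add_nonneg (hfun_nonneg x) (bfun_nonneg σ T x)
      have h2' : 0 ≤ ∫ t in Set.Ioc τ₂ τ₁,
          K * σ / (2 * Real.sqrt t) * gauss (dTwo σ r t x) :=
        setIntegral_nonneg measurableSet_Ioc fun t _ => gterm_nonneg hσ hK t x
      linarith
    · intro x
      have hpp := psi_pointwise (T := T) hσ hr hK h2 hlt h1T x
      show Real.exp (min x 0) * |wPut σ r K τ₁ x - wPut σ r K τ₂ x| ≤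
        c1 * (τ₁ - τ₂) * (hfun x + bfun σ T x) +
          ∫ t in Set.Ioc τ₂ τ₁, K * σ / (2 * Real.sqrt t) * gauss (dTwo σ r t x)
      rw [hc1]
      linarith [hpp]
    · show (∫ x : ℝ, (c1 * (τ₁ - τ₂) * (hfun x + bfun σ T x) +
        ∫ t in Set.Ioc τ₂ τ₁, K * σ / (2 * Real.sqrt t) * gauss (dTwo σ r t x)))
        ≤ M₂ * (τ₁ - τ₂)
      rw [integral_add (hhb.const_mul (c1 * (τ₁ - τ₂)))
        (T3_integrable hσ hK h2 hle r), integral_const_mul, T3_integral hσ hK h2 hle r]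
      have hMle : c1 * (∫ y, (hfun y + bfun σ T y)) + K * σ ^ 2 / 2 ≤ M₂ := le_max_right _ _
      have hnn : 0 ≤ ∫ y, (hfun y + bfun σ T y) :=
        integral_nonneg fun y => add_nonneg (hfun_nonneg y) (bfun_nonneg σ T y)
      calc c1 * (τ₁ - τ₂) * (∫ y, (hfun y + bfun σ T y)) + K * σ ^ 2 / 2 * (τ₁ - τ₂)
          = (c1 * (∫ y, (hfun y + bfun σ T y)) + K * σ ^ 2 / 2) * (τ₁ - τ₂) := by ring
        _ ≤ M₂ * (τ₁ - τ₂) := mul_le_mul_of_nonneg_right hMle hΔ.le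
end keyest

/-- The penalty operator `g_ε(τ,U)(x) = ε⁻¹ e^{x⁻}(w(τ,x) − U(x))⁺`. -/
noncomputable def penaltyOp (σ r K ε τ : ℝ) (U : ℝ → ℝ) (x : ℝ) : ℝ :=
  ε⁻¹ * Real.exp (min x 0) * max (wPut σ r K τ x - U x) 0

/-- the penalty operator is Hölder continuous in `τ` with
exponent `(p+1)/(2p)`, uniformly in `U ∈ L^p`. -/
theorem penalty_operator_holder_in_time
    (σ r K p T ε : ℝ) (hσ : 0 < σ) (hr : 0 ≤ r) (hK : 0 < K)
    (hp : 1 ≤ p) (hT : 0 < T) (hε : 0 < ε) :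
    ∃ C₀ : ℝ, 0 < C₀ ∧ ∀ U : ℝ → ℝ, ∀ τ₁ τ₂ : ℝ,
      0 < τ₁ → τ₁ ≤ T → 0 < τ₂ → τ₂ ≤ T →
      (∫ x : ℝ, |penaltyOp σ r K ε τ₁ U x - penaltyOp σ r K ε τ₂ U x| ^ p) ^ (1 / p) ≤
        ε⁻¹ * C₀ * |τ₁ - τ₂| ^ ((p + 1) / (2 * p)) := by
  obtain ⟨M₁, M₂, hM₁, hM₂, hmain⟩ := key_estimate (σ := σ) (r := r) (K := K) (T := T)
    hσ hr hK hT
  have hp0 : 0 < p := lt_of_lt_of_le one_pos hp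
  have hεinv : (0:ℝ) < ε⁻¹ := inv_pos.2 hε
  refine ⟨M₁ * M₂, by nlinarith, ?_⟩
  -- main case lemma
  have main : ∀ U : ℝ → ℝ, ∀ τ₁ τ₂ : ℝ, 0 < τ₂ → τ₂ < τ₁ → τ₁ ≤ T →
      (∫ x : ℝ, |penaltyOp σ r K ε τ₁ U x - penaltyOp σ r K ε τ₂ U x| ^ p) ^ (1 / p) ≤
        ε⁻¹ * (M₁ * M₂) * |τ₁ - τ₂| ^ ((p + 1) / (2 * p)) := by
    intro U τ₁ τ₂ h2 hlt h1T
    obtain ⟨hsup, Ψ, hΨint, hΨnn, hΨle, hΨsum⟩ := hmain τ₁ τ₂ h2 hlt h1T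
    set Δ := τ₁ - τ₂ with hΔdef
    have hΔ : 0 < Δ := by rw [hΔdef]; linarith
    have habsΔ : |τ₁ - τ₂| = Δ := abs_of_pos hΔ
    have hsΔ : 0 ≤ Real.sqrt Δ := Real.sqrt_nonneg _
    have hMs : 0 ≤ M₁ * Real.sqrt Δ := mul_nonneg (by linarith) hsΔ
    -- pointwise bound on penalty difference
    have hpen : ∀ x, |penaltyOp σ r K ε τ₁ U x - penaltyOp σ r K ε τ₂ U x| ≤
        ε⁻¹ * (Real.exp (min x 0) * |wPut σ r K τ₁ x - wPut σ r K τ₂ x|) := by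
      intro x
      have hsplit : penaltyOp σ r K ε τ₁ U x - penaltyOp σ r K ε τ₂ U x =
          ε⁻¹ * Real.exp (min x 0) * (max (wPut σ r K τ₁ x - U x) 0 -
            max (wPut σ r K τ₂ x - U x) 0) := by
        rw [penaltyOp, penaltyOp]; ring
      rw [hsplit, abs_mul, abs_of_nonneg (mul_nonneg hεinv.le (Real.exp_nonneg _))]
      have h1 : |max (wPut σ r K τ₁ x - U x) 0 - max (wPut σ r K τ₂ x - U x) 0| ≤
          |wPut σ r K τ₁ x - wPut σ r K τ₂ x| := by
        have := abs_max_sub_max_le_abs (wPut σ r K τ₁ x - U x) (wPut σ r K τ₂ x - U x) 0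
        have heq : wPut σ r K τ₁ x - U x - (wPut σ r K τ₂ x - U x) =
            wPut σ r K τ₁ x - wPut σ r K τ₂ x := by ring
        rwa [heq] at this
      calc ε⁻¹ * Real.exp (min x 0) * |max (wPut σ r K τ₁ x - U x) 0 -
            max (wPut σ r K τ₂ x - U x) 0|
          ≤ ε⁻¹ * Real.exp (min x 0) * |wPut σ r K τ₁ x - wPut σ r K τ₂ x| :=
            mul_le_mul_of_nonneg_left h1 (mul_nonneg hεinv.le (Real.exp_nonneg _))
        _ = ε⁻¹ * (Real.exp (min x 0) * |wPut σ r K τ₁ x - wPut σ r K τ₂ x|) := by ring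
    -- pointwise rpow bound
    have hpt : ∀ x, |penaltyOp σ r K ε τ₁ U x - penaltyOp σ r K ε τ₂ U x| ^ p ≤
        ε⁻¹ ^ p * ((M₁ * Real.sqrt Δ) ^ (p - 1) * Ψ x) := by
      intro x
      set F := Real.exp (min x 0) * |wPut σ r K τ₁ x - wPut σ r K τ₂ x| with hF
      have hFnn : 0 ≤ F := mul_nonneg (Real.exp_nonneg _) (abs_nonneg _)
      have step1 : |penaltyOp σ r K ε τ₁ U x - penaltyOp σ r K ε τ₂ U x| ^ p ≤
          (ε⁻¹ * F) ^ p :=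
        Real.rpow_le_rpow (abs_nonneg _) (hpen x) hp0.le
      have step2 : (ε⁻¹ * F) ^ p = ε⁻¹ ^ p * F ^ p := Real.mul_rpow hεinv.le hFnn
      have step3 : F ^ p ≤ (M₁ * Real.sqrt Δ) ^ (p - 1) * Ψ x := by
        rcases eq_or_lt_of_le hFnn with hF0 | hFpos
        · rw [← hF0, Real.zero_rpow hp0.ne']
          exact mul_nonneg (Real.rpow_nonneg hMs _) (hΨnn x)
        · have hdecomp : F ^ (p - 1) * F = F ^ p := by
            nth_rewrite 2 [← Real.rpow_one F]
            rw [← Real.rpow_add hFpos]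
            norm_num
          rw [← hdecomp]
          have h1 : F ^ (p - 1) ≤ (M₁ * Real.sqrt Δ) ^ (p - 1) :=
            Real.rpow_le_rpow hFnn (hsup x) (by linarith)
          exact mul_le_mul h1 (hΨle x) hFnn (Real.rpow_nonneg hMs _)
      calc |penaltyOp σ r K ε τ₁ U x - penaltyOp σ r K ε τ₂ U x| ^ p
          ≤ (ε⁻¹ * F) ^ p := step1
        _ = ε⁻¹ ^ p * F ^ p := step2
        _ ≤ ε⁻¹ ^ p * ((M₁ * Real.sqrt Δ) ^ (p - 1) * Ψ x) :=
            mul_le_mul_of_nonneg_left step3 (Real.rpow_nonneg hεinv.le _)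
    -- integrate
    have hGint : Integrable (fun x => ε⁻¹ ^ p * ((M₁ * Real.sqrt Δ) ^ (p - 1) * Ψ x)) :=
      (hΨint.const_mul _).const_mul _
    have hI : (∫ x : ℝ, |penaltyOp σ r K ε τ₁ U x - penaltyOp σ r K ε τ₂ U x| ^ p) ≤
        ε⁻¹ ^ p * ((M₁ * Real.sqrt Δ) ^ (p - 1) * (M₂ * Δ)) := by
      have h1 : (∫ x : ℝ, |penaltyOp σ r K ε τ₁ U x - penaltyOp σ r K ε τ₂ U x| ^ p) ≤
          ∫ x : ℝ, ε⁻¹ ^ p * ((M₁ * Real.sqrt Δ) ^ (p - 1) * Ψ x) := by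
        apply integral_mono_of_nonneg
        · exact Filter.Eventually.of_forall fun x => Real.rpow_nonneg (abs_nonneg _) p
        · exact hGint
        · exact Filter.Eventually.of_forall hpt
      have h2 : (∫ x : ℝ, ε⁻¹ ^ p * ((M₁ * Real.sqrt Δ) ^ (p - 1) * Ψ x)) =
          ε⁻¹ ^ p * (M₁ * Real.sqrt Δ) ^ (p - 1) * ∫ x, Ψ x := by
        rw [integral_const_mul, integral_const_mul]; ring
      have h3 : ε⁻¹ ^ p * (M₁ * Real.sqrt Δ) ^ (p - 1) * ∫ x, Ψ x ≤
          ε⁻¹ ^ p * (M₁ * Real.sqrt Δ) ^ (p - 1) * (M₂ * Δ) :=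
        mul_le_mul_of_nonneg_left hΨsum
          (mul_nonneg (Real.rpow_nonneg hεinv.le _) (Real.rpow_nonneg hMs _))
      calc (∫ x : ℝ, |penaltyOp σ r K ε τ₁ U x - penaltyOp σ r K ε τ₂ U x| ^ p)
          ≤ ∫ x : ℝ, ε⁻¹ ^ p * ((M₁ * Real.sqrt Δ) ^ (p - 1) * Ψ x) := h1
        _ = ε⁻¹ ^ p * (M₁ * Real.sqrt Δ) ^ (p - 1) * ∫ x, Ψ x := h2
        _ ≤ ε⁻¹ ^ p * (M₁ * Real.sqrt Δ) ^ (p - 1) * (M₂ * Δ) := h3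
        _ = ε⁻¹ ^ p * ((M₁ * Real.sqrt Δ) ^ (p - 1) * (M₂ * Δ)) := by ring
    -- simplify the RHS product
    have hX : ε⁻¹ ^ p * ((M₁ * Real.sqrt Δ) ^ (p - 1) * (M₂ * Δ)) =
        ε⁻¹ ^ p * (M₁ ^ (p - 1) * (M₂ * Δ ^ ((p + 1) / 2))) := by
      have hΔsplit : Δ ^ ((p + 1) / 2) = Δ ^ ((1:ℝ)/2 * (p - 1)) * Δ := by
        rw [← Real.rpow_add_one hΔ.ne']
        congr 1
        ring
      rw [Real.mul_rpow (by linarith : (0:ℝ) ≤ M₁) hsΔ, Real.sqrt_eq_rpow,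
        ← Real.rpow_mul hΔ.le, hΔsplit]
      ring
    -- take p-th root
    have hInonneg : 0 ≤ ∫ x : ℝ, |penaltyOp σ r K ε τ₁ U x - penaltyOp σ r K ε τ₂ U x| ^ p :=
      integral_nonneg fun x => Real.rpow_nonneg (abs_nonneg _) p
    have hroot : (∫ x : ℝ, |penaltyOp σ r K ε τ₁ U x - penaltyOp σ r K ε τ₂ U x| ^ p) ^ (1/p)
        ≤ (ε⁻¹ ^ p * (M₁ ^ (p - 1) * (M₂ * Δ ^ ((p + 1) / 2)))) ^ (1/p) := by
      apply Real.rpow_le_rpow hInonneg (by rw [← hX]; exact hI) (by positivity)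
    refine hroot.trans ?_
    -- expand the root
    have e0 : (0:ℝ) ≤ M₁ ^ (p - 1) := Real.rpow_nonneg (by linarith) _
    have e1 : (0:ℝ) ≤ Δ ^ ((p + 1) / 2) := Real.rpow_nonneg hΔ.le _
    have e2 : (0:ℝ) ≤ M₂ * Δ ^ ((p + 1) / 2) := mul_nonneg (by linarith) e1
    rw [Real.mul_rpow (Real.rpow_nonneg hεinv.le _) (mul_nonneg e0 e2),
      Real.mul_rpow e0 e2, Real.mul_rpow (by linarith : (0:ℝ) ≤ M₂) e1,
      ← Real.rpow_mul hεinv.le, ← Real.rpow_mul (by linarith : (0:ℝ) ≤ M₁),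
      ← Real.rpow_mul hΔ.le]
    rw [mul_one_div_cancel hp0.ne', Real.rpow_one]
    rw [show (p + 1) / 2 * (1 / p) = (p + 1) / (2 * p) by field_simp]
    have f1 : M₁ ^ ((p - 1) * (1 / p)) ≤ M₁ := by
      calc M₁ ^ ((p - 1) * (1 / p)) ≤ M₁ ^ (1:ℝ) :=
            Real.rpow_le_rpow_of_exponent_le hM₁ (by
              rw [mul_one_div]
              rw [div_le_one hp0]
              linarith)
        _ = M₁ := Real.rpow_one _
    have f2 : M₂ ^ ((1:ℝ) / p) ≤ M₂ := by
      calc M₂ ^ ((1:ℝ) / p) ≤ M₂ ^ (1:ℝ) :=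
            Real.rpow_le_rpow_of_exponent_le hM₂ (by
              rw [div_le_one hp0]
              linarith)
        _ = M₂ := Real.rpow_one _
    have hδα : (0:ℝ) ≤ Δ ^ ((p + 1) / (2 * p)) := Real.rpow_nonneg hΔ.le _
    rw [habsΔ]
    have hM1nn : 0 ≤ M₁ ^ ((p - 1) * (1 / p)) := Real.rpow_nonneg (by linarith) _
    have hM2nn : 0 ≤ M₂ ^ ((1:ℝ) / p) := Real.rpow_nonneg (by linarith) _
    calc ε⁻¹ * (M₁ ^ ((p - 1) * (1 / p)) * (M₂ ^ ((1:ℝ)/p) * Δ ^ ((p + 1) / (2 * p))))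
        ≤ ε⁻¹ * (M₁ * (M₂ * Δ ^ ((p + 1) / (2 * p)))) := by
          apply mul_le_mul_of_nonneg_left _ hεinv.le
          apply mul_le_mul f1 _ (mul_nonneg hM2nn hδα) (by linarith)
          exact mul_le_mul_of_nonneg_right f2 hδα
      _ = ε⁻¹ * (M₁ * M₂) * Δ ^ ((p + 1) / (2 * p)) := by ring
  -- now dispatch all cases
  intro U τ₁ τ₂ h1 h1T h2 h2T
  rcases lt_trichotomy τ₁ τ₂ with hlt | heq | hgt
  · have := main U τ₂ τ₁ h1 hlt h2T
    have habs : ∀ x, |penaltyOp σ r K ε τ₁ U x - penaltyOp σ r K ε τ₂ U x| =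
        |penaltyOp σ r K ε τ₂ U x - penaltyOp σ r K ε τ₁ U x| := fun x => abs_sub_comm _ _
    have hts : |τ₁ - τ₂| = |τ₂ - τ₁| := abs_sub_comm _ _
    calc (∫ x : ℝ, |penaltyOp σ r K ε τ₁ U x - penaltyOp σ r K ε τ₂ U x| ^ p) ^ (1/p)
        = (∫ x : ℝ, |penaltyOp σ r K ε τ₂ U x - penaltyOp σ r K ε τ₁ U x| ^ p) ^ (1/p) := by
          congr 1
          exact integral_congr_ae (Filter.Eventually.of_forall fun x => by
            dsimp only
            rw [habs x])
      _ ≤ ε⁻¹ * (M₁ * M₂) * |τ₂ - τ₁| ^ ((p + 1) / (2 * p)) := this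
      _ = ε⁻¹ * (M₁ * M₂) * |τ₁ - τ₂| ^ ((p + 1) / (2 * p)) := by rw [hts]
  · subst heq
    have hz : ∀ x : ℝ, |penaltyOp σ r K ε τ₁ U x - penaltyOp σ r K ε τ₁ U x| ^ p = 0 := by
      intro x
      rw [sub_self, abs_zero, Real.zero_rpow hp0.ne']
    rw [show (∫ x : ℝ, |penaltyOp σ r K ε τ₁ U x - penaltyOp σ r K ε τ₁ U x| ^ p) = 0 by
      rw [integral_congr_ae (Filter.Eventually.of_forall hz)]; simp]
    rw [Real.zero_rpow (by positivity : 1/p ≠ 0), sub_self, abs_zero,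
      Real.zero_rpow (by positivity : (p + 1) / (2 * p) ≠ 0), mul_zero]
  · exact main U τ₁ τ₂ h2 hgt h1T
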